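/- Let F be the global map of ECA rule 130 and let p ∈ [0,1]. Then for every n ≥ 0, the probability of the symbol 0 after n iterations starting from the Bernoulli measure μ_p is P_n(0) = 1 − p^{2n+1} − p·(−p^{4⌈(n−2)/2⌉+4} + p^{4⌈(n−2)/2⌉+5} − p^{4⌊n/2⌋+3} + p³ − p + 1)/(p³ + p² + p + 1), where ⌈·⌉ and ⌊·⌋ denote integer ceiling and floor applied to (n−2)/2 and n/2 respectively (computed in ℤ, so that for n ∈ {0,1} the resulting exponents are still nonnegative). -/

import Mathlib

open MeasureTheory

/-- The cylinder set generated by the binary word `b` (anchored at `0`). -/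
def cylinder (b : List Bool) : Set (ℤ → Bool) :=
  {x | ∀ j : Fin b.length, x (j.val : ℤ) = b.get j}

/-- The global map of the elementary cellular automaton with local rule `f`. -/
def eca (f : Bool → Bool → Bool → Bool) (x : ℤ → Bool) : ℤ → Bool :=
  fun i => f (x (i - 1)) (x i) (x (i + 1))

/-- The local rule of ECA rule 130: `f(x1,x2,x3) = 1` exactly for
`(x1,x2,x3) ∈ {(0,0,1),(1,1,1)}`. -/
def rule130 (x1 x2 x3 : Bool) : Bool := x3 && (x1 == x2)

/-- `μ` is the Bernoulli (i.i.d. product) measure with parameter `p`. -/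
def IsBernoulli (p : ℝ) (μ : Measure (ℤ → Bool)) : Prop :=
  ∀ (s : Finset ℤ) (f : ℤ → Bool),
    μ {x | ∀ i ∈ s, x i = f i} =
      ∏ i ∈ s, (if f i then ENNReal.ofReal p else ENNReal.ofReal (1 - p))

/-! ### Auxiliary material -/

/-- The recursive "chain" predicate describing when `F^[n] x 0 = 1` for rule 130. -/
def T : ℕ → ℤ → (ℤ → Bool) → Bool
  | 0, m, x => x m
  | 1, m, x => x m && (x (m-2) == x (m-1))
  | (d+2), m, x => (!x (m-2) && !x (m-1) && x m)
      || (x (m-2) && x (m-1) && x m && ((!x (m-3) && x (m-4)) || (x (m-3) && T d (m-4) x)))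

lemma T_top : ∀ (d : ℕ) (m : ℤ) (x : ℤ → Bool), T d m x = true → x m = true := by
  intro d m x
  match d with
  | 0 => simp [T]
  | 1 => simp [T]; tauto
  | (d+2) => simp [T]; tauto

lemma eca2 (x : ℤ → Bool) (m : ℤ) :
    eca rule130 (eca rule130 x) m =
      ((x (m+2) && (x m == x (m+1))) &&
        ((x m && (x (m-2) == x (m-1))) == (x (m+1) && (x (m-1) == x m)))) := by
  simp only [eca, rule130]; ring_nf

lemma key : ∀ (d : ℕ) (m : ℤ) (x : ℤ → Bool),
    T d m (eca rule130 (eca rule130 x)) = T (d+2) (m+2) x := by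
  intro d
  induction d using Nat.strong_induction_on with
  | _ d ih =>
    match d with
    | 0 =>
      intro m x
      show eca rule130 (eca rule130 x) m = T 2 (m+2) x
      rw [eca2]
      simp only [T, show m+2-2 = m from by ring, show m+2-1 = m+1 from by ring,
        show m+2-3 = m-1 from by ring, show m+2-4 = m-2 from by ring]
      generalize x (m-2) = a; generalize x (m-1) = b; generalize x m = c
      generalize x (m+1) = e; generalize x (m+2) = f
      revert a b c e f; decide
    | 1 =>
      intro m x
      simp only [T, show m+2-2 = m from by ring, show m+2-1 = m+1 from by ring,
        show m+2-3 = m-1 from by ring, show m+2-4 = m-2 from by ring,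
        show m-2-2 = m-4 from by ring, show m-2-1 = m-3 from by ring]
      rw [eca2 x m, eca2 x (m-2), eca2 x (m-1)]
      simp only [show m-2+2 = m from by ring, show m-2+1 = m-1 from by ring,
        show m-2-2 = m-4 from by ring, show m-2-1 = m-3 from by ring,
        show m-1+2 = m+1 from by ring, show m-1+1 = m from by ring,
        show m-1-2 = m-3 from by ring, show m-1-1 = m-2 from by ring]
      generalize x (m-4) = a1; generalize x (m-3) = a2; generalize x (m-2) = a3
      generalize x (m-1) = a4; generalize x m = a5; generalize x (m+1) = a6
      generalize x (m+2) = a7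
      revert a1 a2 a3 a4 a5 a6 a7; decide
    | (e+2) =>
      intro m x
      have IH := ih e (by omega) (m-4) x
      simp only [T, show m+2-2 = m from by ring, show m+2-1 = m+1 from by ring,
        show m+2-3 = m-1 from by ring, show m+2-4 = m-2 from by ring]
      rw [IH]
      simp only [show m-4+2 = m-2 from by ring]
      simp only [T, show m-2-2 = m-4 from by ring, show m-2-1 = m-3 from by ring,
        show m-2-3 = m-5 from by ring, show m-2-4 = m-6 from by ring]
      rw [eca2 x m, eca2 x (m-1), eca2 x (m-2), eca2 x (m-3), eca2 x (m-4)]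
      simp only [show m-1+2 = m+1 from by ring, show m-1+1 = m from by ring,
        show m-1-2 = m-3 from by ring, show m-1-1 = m-2 from by ring,
        show m-2+2 = m from by ring, show m-2+1 = m-1 from by ring,
        show m-2-2 = m-4 from by ring, show m-2-1 = m-3 from by ring,
        show m-3+2 = m-1 from by ring, show m-3+1 = m-2 from by ring,
        show m-3-2 = m-5 from by ring, show m-3-1 = m-4 from by ring,
        show m-4+2 = m-2 from by ring, show m-4+1 = m-3 from by ring,
        show m-4-2 = m-6 from by ring, show m-4-1 = m-5 from by ring]
      by_cases hu : T e (m-6) x = true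
      · have hx6 : x (m-6) = true := T_top e (m-6) x hu
        rw [hu, hx6]
        generalize x (m-5) = a2; generalize x (m-4) = a3
        generalize x (m-3) = a4; generalize x (m-2) = a5; generalize x (m-1) = a6
        generalize x m = a7; generalize x (m+1) = a8; generalize x (m+2) = a9
        revert a2 a3 a4 a5 a6 a7 a8 a9; decide
      · rw [Bool.not_eq_true] at hu
        rw [hu]
        generalize x (m-6) = a1; generalize x (m-5) = a2; generalize x (m-4) = a3
        generalize x (m-3) = a4; generalize x (m-2) = a5; generalize x (m-1) = a6
        generalize x m = a7; generalize x (m+1) = a8; generalize x (m+2) = a9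
        revert a1 a2 a3 a4 a5 a6 a7 a8 a9; decide

lemma FnT : ∀ (n : ℕ) (m : ℤ) (x : ℤ → Bool),
    (eca rule130)^[n] x m = T n (m + n) x := by
  intro n
  induction n using Nat.strong_induction_on with
  | _ n ih =>
    match n with
    | 0 => intro m x; simp [T]
    | 1 =>
      intro m x
      simp only [Function.iterate_one, eca, rule130, T,
        Nat.cast_one, show m+1-2 = m-1 from by ring, show m+1-1 = m from by ring]
    | (e+2) =>
      intro m x
      have h2 : (eca rule130)^[e+2] x m = (eca rule130)^[e] (eca rule130 (eca rule130 x)) m := by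
        rw [Function.iterate_add_apply]
        simp [Function.iterate_succ]
      rw [h2, ih e (by omega) m (eca rule130 (eca rule130 x)), key e (m+e) x]
      congr 1
      push_cast
      ring

/-! ### Measure-theoretic part -/

def cylE (s : Finset ℤ) (f : ℤ → Bool) : Set (ℤ → Bool) := {x | ∀ i ∈ s, x i = f i}

lemma meas_coord (i : ℤ) (c : Bool) : MeasurableSet {x : ℤ → Bool | x i = c} := by
  have h : {x : ℤ → Bool | x i = c} = (fun x : ℤ → Bool => x i) ⁻¹' {c} := by
    ext x; simp
  rw [h]
  exact (measurable_pi_apply i) (measurableSet_singleton c)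

lemma meas_cyl (s : Finset ℤ) (f : ℤ → Bool) : MeasurableSet (cylE s f) := by
  have h : cylE s f = ⋂ i ∈ (↑s : Set ℤ), {x : ℤ → Bool | x i = f i} := by
    ext x; simp [cylE]
  rw [h]
  exact MeasurableSet.biInter s.countable_toSet fun i _ => meas_coord i (f i)

lemma cyl_inter_coord (s : Finset ℤ) (f : ℤ → Bool) (j : ℤ) (b : Bool) (hj : j ∉ s) :
    cylE s f ∩ {x | x j = b} = cylE (insert j s) (Function.update f j b) := by
  ext x
  simp only [cylE, Set.mem_inter_iff, Set.mem_setOf_eq, Finset.forall_mem_insert,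
    Function.update_self]
  constructor
  · rintro ⟨h1, h2⟩
    refine ⟨h2, fun i hi => ?_⟩
    have hne : i ≠ j := fun h => hj (h ▸ hi)
    rw [Function.update_of_ne hne]; exact h1 i hi
  · rintro ⟨h1, h2⟩
    refine ⟨fun i hi => ?_, h1⟩
    have hne : i ≠ j := fun h => hj (h ▸ hi)
    have := h2 i hi
    rwa [Function.update_of_ne hne] at this

lemma step1 (s : Finset ℤ) (f : ℤ → Bool) (j : ℤ) (b : Bool) (hj : j ∉ s) (R : Set (ℤ → Bool)) :
    cylE s f ∩ ({x | x j = b} ∩ R) = cylE (insert j s) (Function.update f j b) ∩ R := by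
  rw [← Set.inter_assoc, cyl_inter_coord s f j b hj]

lemma T1_iff (m : ℤ) (x : ℤ → Bool) : T 1 m x = true ↔
    (x (m-2) = false ∧ (x (m-1) = false ∧ x m = true)) ∨
    (x (m-2) = true ∧ (x (m-1) = true ∧ x m = true)) := by
  simp only [T, Bool.and_eq_true, beq_iff_eq]
  cases h1 : x (m-2) <;> cases h2 : x (m-1) <;> cases h3 : x m <;> simp

lemma T2_iff (d : ℕ) (m : ℤ) (x : ℤ → Bool) : T (d+2) m x = true ↔
    (x (m-2) = false ∧ (x (m-1) = false ∧ x m = true)) ∨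
    ((x (m-4) = true ∧ (x (m-3) = false ∧ (x (m-2) = true ∧ (x (m-1) = true ∧ x m = true)))) ∨
     (x (m-3) = true ∧ (x (m-2) = true ∧ (x (m-1) = true ∧ (x m = true ∧ T d (m-4) x = true))))) := by
  simp only [T, Bool.or_eq_true, Bool.and_eq_true, Bool.not_eq_true']
  tauto

lemma meas_S : ∀ (d : ℕ) (m : ℤ), MeasurableSet {x : ℤ → Bool | T d m x = true} := by
  intro d
  induction d using Nat.strong_induction_on with
  | _ d ih =>
    match d with
    | 0 =>
      intro m
      have h : {x : ℤ → Bool | T 0 m x = true} = {x | x m = true} := by ext x; simp [T]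
      rw [h]; exact meas_coord m true
    | 1 =>
      intro m
      have h : {x : ℤ → Bool | T 1 m x = true} =
          ({x | x (m-2) = false} ∩ ({x | x (m-1) = false} ∩ {x | x m = true})) ∪
          ({x | x (m-2) = true} ∩ ({x | x (m-1) = true} ∩ {x | x m = true})) := by
        ext x
        simp only [Set.mem_union, Set.mem_inter_iff, Set.mem_setOf_eq]
        exact T1_iff m x
      rw [h]
      exact (((meas_coord _ _).inter ((meas_coord _ _).inter (meas_coord _ _))).union
        ((meas_coord _ _).inter ((meas_coord _ _).inter (meas_coord _ _))))
    | (e+2) =>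
      intro m
      have h : {x : ℤ → Bool | T (e+2) m x = true} =
          ({x | x (m-2) = false} ∩ ({x | x (m-1) = false} ∩ {x | x m = true})) ∪
          (({x | x (m-4) = true} ∩ ({x | x (m-3) = false} ∩ ({x | x (m-2) = true} ∩
            ({x | x (m-1) = true} ∩ {x | x m = true})))) ∪
           ({x | x (m-3) = true} ∩ ({x | x (m-2) = true} ∩ ({x | x (m-1) = true} ∩
            ({x | x m = true} ∩ {x | T e (m-4) x = true}))))) := by
        ext x
        simp only [Set.mem_union, Set.mem_inter_iff, Set.mem_setOf_eq]
        exact T2_iff e m x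
      rw [h]
      exact (((meas_coord _ _).inter ((meas_coord _ _).inter (meas_coord _ _))).union
        (((meas_coord _ _).inter ((meas_coord _ _).inter ((meas_coord _ _).inter
          ((meas_coord _ _).inter (meas_coord _ _))))).union
         ((meas_coord _ _).inter ((meas_coord _ _).inter ((meas_coord _ _).inter
          ((meas_coord _ _).inter (ih e (by omega) (m-4))))))))

noncomputable def wB (p : ℝ) (b : Bool) : ENNReal :=
  if b then ENNReal.ofReal p else ENNReal.ofReal (1 - p)

lemma wB_true {p : ℝ} : wB p true = ENNReal.ofReal p := by simp [wB]
lemma wB_false {p : ℝ} : wB p false = ENNReal.ofReal (1 - p) := by simp [wB]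

noncomputable def tauR (p : ℝ) : ℕ → ℝ
  | 0 => p
  | 1 => p * (1-p)^2 + p^3
  | (d+2) => p * (1-p)^2 + p^4 * (1-p) + p^4 * tauR p d

section Master
variable {p : ℝ} {μ : Measure (ℤ → Bool)}

lemma tau_nonneg (hp0 : 0 ≤ p) (hp1 : p ≤ 1) : ∀ d, 0 ≤ tauR p d := by
  intro d
  induction d using Nat.strong_induction_on with
  | _ d ih =>
    match d with
    | 0 => simpa [tauR] using hp0
    | 1 =>
      simp only [tauR]
      nlinarith [mul_nonneg hp0 (sq_nonneg (1-p)), pow_nonneg hp0 3]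
    | (e+2) =>
      have := ih e (by omega)
      simp only [tauR]
      nlinarith [mul_nonneg hp0 (sq_nonneg (1-p)), pow_nonneg hp0 4,
        mul_nonneg (pow_nonneg hp0 4) (by linarith : (0:ℝ) ≤ 1 - p),
        mul_nonneg (pow_nonneg hp0 4) this]

lemma tau_le_one (hp0 : 0 ≤ p) (hp1 : p ≤ 1) : ∀ d, tauR p d ≤ 1 := by
  intro d
  induction d using Nat.strong_induction_on with
  | _ d ih =>
    match d with
    | 0 => simpa [tauR] using hp1
    | 1 =>
      simp only [tauR]
      nlinarith [mul_nonneg (by linarith : (0:ℝ) ≤ 1-p) (by nlinarith [sq_nonneg p] : (0:ℝ) ≤ 1+2*p^2)]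
    | (e+2) =>
      have h1 := ih e (by omega)
      have h1p : (0:ℝ) ≤ 1 - p := by linarith
      have hq : (0:ℝ) ≤ 1+2*p^2+p^3*(1-p) := by
        nlinarith [sq_nonneg p, mul_nonneg (pow_nonneg hp0 3) h1p]
      simp only [tauR]
      nlinarith [mul_nonneg h1p hq, mul_nonneg (pow_nonneg hp0 4) (by linarith : (0:ℝ) ≤ 1 - tauR p e)]

lemma prod_step (s : Finset ℤ) (g : ℤ → Bool) (j : ℤ) (b : Bool) (hj : j ∉ s) :
    ∏ i ∈ insert j s, wB p (Function.update g j b i) = wB p b * ∏ i ∈ s, wB p (g i) := by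
  rw [Finset.prod_insert hj, Function.update_self]
  congr 1
  refine Finset.prod_congr rfl fun i hi => ?_
  have hne : i ≠ j := fun h => hj (h ▸ hi)
  rw [Function.update_of_ne hne]

lemma hber_cyl (hber : IsBernoulli p μ) (s : Finset ℤ) (f : ℤ → Bool) :
    μ (cylE s f) = ∏ i ∈ s, wB p (f i) := hber s f

lemma master (hp0 : 0 ≤ p) (hp1 : p ≤ 1) (hber : IsBernoulli p μ) :
    ∀ (d : ℕ) (m : ℤ) (s : Finset ℤ) (f : ℤ → Bool), (∀ i ∈ s, m < i) →
      μ (cylE s f ∩ {x | T d m x = true}) =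
        (∏ i ∈ s, wB p (f i)) * ENNReal.ofReal (tauR p d) := by
  intro d
  induction d using Nat.strong_induction_on with
  | _ d ih =>
    match d with
    | 0 =>
      intro m s f hs
      have hm : m ∉ s := fun h => absurd (hs _ h) (by omega)
      have h0 : {x : ℤ → Bool | T 0 m x = true} = {x | x m = true} := by ext x; simp [T]
      rw [h0, cyl_inter_coord s f m true hm, hber_cyl hber, prod_step s f m true hm]
      simp only [wB_true, wB_false, tauR]
      ring
    | 1 =>
      intro m s f hs
      have hm2 : m-2 ∉ s := fun h => absurd (hs _ h) (by omega)
      have hm1 : m-1 ∉ insert (m-2) s := by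
        simp only [Finset.mem_insert, not_or]
        exact ⟨by omega, fun h => absurd (hs _ h) (by omega)⟩
      have hm0 : m ∉ insert (m-1) (insert (m-2) s) := by
        simp only [Finset.mem_insert, not_or]
        exact ⟨by omega, by omega, fun h => absurd (hs _ h) (by omega)⟩
      have hset : {x : ℤ → Bool | T 1 m x = true} =
          ({x | x (m-2) = false} ∩ ({x | x (m-1) = false} ∩ {x | x m = true})) ∪
          ({x | x (m-2) = true} ∩ ({x | x (m-1) = true} ∩ {x | x m = true})) := by
        ext x; simp only [Set.mem_union, Set.mem_inter_iff, Set.mem_setOf_eq]; exact T1_iff m x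
      rw [hset, Set.inter_union_distrib_left]
      rw [measure_union ?hd ((meas_cyl s f).inter ((meas_coord _ _).inter
        ((meas_coord _ _).inter (meas_coord _ _))))]
      case hd =>
        rw [Set.disjoint_left]
        rintro x ⟨-, hx2, -⟩ ⟨-, hy2, -⟩
        simp only [Set.mem_setOf_eq] at hx2 hy2
        rw [hx2] at hy2; exact Bool.false_ne_true hy2
      rw [step1 s f (m-2) false hm2, step1 _ _ (m-1) false hm1,
          cyl_inter_coord _ _ m true hm0,
          step1 s f (m-2) true hm2, step1 _ _ (m-1) true hm1,
          cyl_inter_coord _ _ m true hm0]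
      rw [hber_cyl hber, hber_cyl hber]
      rw [prod_step _ _ m true hm0, prod_step _ _ (m-1) false hm1, prod_step s f (m-2) false hm2,
          prod_step _ _ m true hm0, prod_step _ _ (m-1) true hm1, prod_step s f (m-2) true hm2]
      simp only [wB_true, wB_false, tauR]
      have h1p : (0:ℝ) ≤ 1 - p := by linarith
      rw [show p * (1-p)^2 + p^3 = (1-p) * ((1-p) * p) + p * (p * p) from by ring,
        ENNReal.ofReal_add (mul_nonneg h1p (mul_nonneg h1p hp0)) (mul_nonneg hp0 (mul_nonneg hp0 hp0)),
        ENNReal.ofReal_mul h1p, ENNReal.ofReal_mul h1p,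
        ENNReal.ofReal_mul hp0, ENNReal.ofReal_mul hp0]
      ring
    | (e+2) =>
      intro m s f hs
      have hm4 : m-4 ∉ s := fun h => absurd (hs _ h) (by omega)
      have hm3 : m-3 ∉ s := fun h => absurd (hs _ h) (by omega)
      have hm2 : m-2 ∉ s := fun h => absurd (hs _ h) (by omega)
      have hm3' : m-3 ∉ insert (m-4) s := by
        simp only [Finset.mem_insert, not_or]
        exact ⟨by omega, fun h => absurd (hs _ h) (by omega)⟩
      have hm2' : m-2 ∉ insert (m-3) (insert (m-4) s) := by
        simp only [Finset.mem_insert, not_or]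
        exact ⟨by omega, by omega, fun h => absurd (hs _ h) (by omega)⟩
      have hm1' : m-1 ∉ insert (m-2) (insert (m-3) (insert (m-4) s)) := by
        simp only [Finset.mem_insert, not_or]
        exact ⟨by omega, by omega, by omega, fun h => absurd (hs _ h) (by omega)⟩
      have hm0' : m ∉ insert (m-1) (insert (m-2) (insert (m-3) (insert (m-4) s))) := by
        simp only [Finset.mem_insert, not_or]
        exact ⟨by omega, by omega, by omega, by omega, fun h => absurd (hs _ h) (by omega)⟩
      have hm1 : m-1 ∉ insert (m-2) s := by
        simp only [Finset.mem_insert, not_or]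
        exact ⟨by omega, fun h => absurd (hs _ h) (by omega)⟩
      have hm0 : m ∉ insert (m-1) (insert (m-2) s) := by
        simp only [Finset.mem_insert, not_or]
        exact ⟨by omega, by omega, fun h => absurd (hs _ h) (by omega)⟩
      have hq2 : m-2 ∉ insert (m-3) s := by
        simp only [Finset.mem_insert, not_or]
        exact ⟨by omega, fun h => absurd (hs _ h) (by omega)⟩
      have hq1 : m-1 ∉ insert (m-2) (insert (m-3) s) := by
        simp only [Finset.mem_insert, not_or]
        exact ⟨by omega, by omega, fun h => absurd (hs _ h) (by omega)⟩
      have hq0 : m ∉ insert (m-1) (insert (m-2) (insert (m-3) s)) := by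
        simp only [Finset.mem_insert, not_or]
        exact ⟨by omega, by omega, by omega, fun h => absurd (hs _ h) (by omega)⟩
      have hset : {x : ℤ → Bool | T (e+2) m x = true} =
          ({x | x (m-2) = false} ∩ ({x | x (m-1) = false} ∩ {x | x m = true})) ∪
          (({x | x (m-4) = true} ∩ ({x | x (m-3) = false} ∩ ({x | x (m-2) = true} ∩
            ({x | x (m-1) = true} ∩ {x | x m = true})))) ∪
           ({x | x (m-3) = true} ∩ ({x | x (m-2) = true} ∩ ({x | x (m-1) = true} ∩
            ({x | x m = true} ∩ {x | T e (m-4) x = true}))))) := by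
        ext x; simp only [Set.mem_union, Set.mem_inter_iff, Set.mem_setOf_eq]; exact T2_iff e m x
      rw [hset, Set.inter_union_distrib_left, Set.inter_union_distrib_left]
      have measP2 : MeasurableSet (cylE s f ∩ ({x : ℤ → Bool | x (m-4) = true} ∩
          ({x | x (m-3) = false} ∩ ({x | x (m-2) = true} ∩
            ({x | x (m-1) = true} ∩ {x | x m = true}))))) :=
        (meas_cyl s f).inter ((meas_coord _ _).inter ((meas_coord _ _).inter
          ((meas_coord _ _).inter ((meas_coord _ _).inter (meas_coord _ _)))))
      have measP3 : MeasurableSet (cylE s f ∩ ({x : ℤ → Bool | x (m-3) = true} ∩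
          ({x | x (m-2) = true} ∩ ({x | x (m-1) = true} ∩
            ({x | x m = true} ∩ {x | T e (m-4) x = true}))))) :=
        (meas_cyl s f).inter ((meas_coord _ _).inter ((meas_coord _ _).inter
          ((meas_coord _ _).inter ((meas_coord _ _).inter (meas_S e (m-4))))))
      rw [measure_union ?hd1 (measP2.union measP3), measure_union ?hd2 measP3]
      case hd1 =>
        rw [Set.disjoint_left]
        rintro x ⟨-, hx2, -⟩ hy
        simp only [Set.mem_setOf_eq] at hx2
        rcases hy with ⟨-, -, -, hy2, -⟩ | ⟨-, -, hy2, -⟩ <;>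
          (simp only [Set.mem_setOf_eq] at hy2; rw [hx2] at hy2; exact Bool.false_ne_true hy2)
      case hd2 =>
        rw [Set.disjoint_left]
        rintro x ⟨-, -, hx3, -⟩ ⟨-, hy3, -⟩
        simp only [Set.mem_setOf_eq] at hx3 hy3
        rw [hx3] at hy3; exact Bool.false_ne_true hy3
      rw [step1 s f (m-2) false hm2, step1 _ _ (m-1) false hm1, cyl_inter_coord _ _ m true hm0]
      rw [step1 s f (m-4) true hm4, step1 _ _ (m-3) false hm3', step1 _ _ (m-2) true hm2',
          step1 _ _ (m-1) true hm1', cyl_inter_coord _ _ m true hm0']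
      rw [step1 s f (m-3) true hm3, step1 _ _ (m-2) true hq2, step1 _ _ (m-1) true hq1,
          step1 _ _ m true hq0]
      have hIH := ih e (by omega) (m-4)
        (insert m (insert (m-1) (insert (m-2) (insert (m-3) s))))
        (Function.update (Function.update (Function.update (Function.update f (m-3) true)
          (m-2) true) (m-1) true) m true) ?hgt
      case hgt =>
        intro i hi
        simp only [Finset.mem_insert] at hi
        rcases hi with rfl | rfl | rfl | rfl | hi
        · omega
        · omega
        · omega
        · omega
        · have := hs _ hi; omega
      rw [hIH, hber_cyl hber, hber_cyl hber]
      rw [prod_step _ _ m true hm0, prod_step _ _ (m-1) false hm1, prod_step s f (m-2) false hm2]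
      rw [prod_step _ _ m true hm0', prod_step _ _ (m-1) true hm1', prod_step _ _ (m-2) true hm2',
          prod_step _ _ (m-3) false hm3', prod_step s f (m-4) true hm4]
      rw [prod_step _ _ m true hq0, prod_step _ _ (m-1) true hq1, prod_step _ _ (m-2) true hq2,
          prod_step s f (m-3) true hm3]
      simp only [wB_true, wB_false]
      rw [show tauR p (e+2) = p * (1-p)^2 + p^4 * (1-p) + p^4 * tauR p e from rfl]
      have h1p : (0:ℝ) ≤ 1 - p := by linarith
      have htau := tau_nonneg hp0 hp1 e
      have ha : (0:ℝ) ≤ p * (1-p)^2 := mul_nonneg hp0 (sq_nonneg _)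
      have hb : (0:ℝ) ≤ p^4 * (1-p) := mul_nonneg (pow_nonneg hp0 4) h1p
      have hc : (0:ℝ) ≤ p^4 * tauR p e := mul_nonneg (pow_nonneg hp0 4) htau
      rw [ENNReal.ofReal_add (by linarith) hc, ENNReal.ofReal_add ha hb]
      rw [show (p * (1-p)^2 : ℝ) = (1-p) * ((1-p) * p) from by ring,
          ENNReal.ofReal_mul h1p, ENNReal.ofReal_mul h1p]
      rw [show (p^4 * (1-p) : ℝ) = p * ((1-p) * (p * (p * p))) from by ring,
          ENNReal.ofReal_mul hp0, ENNReal.ofReal_mul h1p, ENNReal.ofReal_mul hp0,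
          ENNReal.ofReal_mul hp0]
      rw [show (p^4 * tauR p e : ℝ) = p * (p * (p * (p * tauR p e))) from by ring,
          ENNReal.ofReal_mul hp0, ENNReal.ofReal_mul hp0, ENNReal.ofReal_mul hp0,
          ENNReal.ofReal_mul hp0]
      ring
end Master

/-! ### Closed form -/

def e1 : ℕ → ℕ
  | 0 => 0
  | 1 => 4
  | (n+2) => e1 n + 4

def e2 : ℕ → ℕ
  | 0 => 3
  | 1 => 3
  | (n+2) => e2 n + 4

lemma ceil_e1 : ∀ n : ℕ, 4 * ⌈((n : ℚ) - 2) / 2⌉ + 4 = (e1 n : ℤ) := by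
  intro n
  induction n using Nat.strong_induction_on with
  | _ n ih =>
    match n with
    | 0 =>
      show 4 * ⌈(((0:ℕ) : ℚ) - 2) / 2⌉ + 4 = ((0:ℕ) : ℤ)
      rw [show ⌈(((0:ℕ) : ℚ) - 2) / 2⌉ = -1 from by rw [Int.ceil_eq_iff] <;> norm_num]
      norm_num
    | 1 =>
      show 4 * ⌈(((1:ℕ) : ℚ) - 2) / 2⌉ + 4 = ((4:ℕ) : ℤ)
      rw [show ⌈(((1:ℕ) : ℚ) - 2) / 2⌉ = 0 from by rw [Int.ceil_eq_iff] <;> norm_num]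
      norm_num
    | (m+2) =>
      have h := ih m (by omega)
      have hh : (((m+2 : ℕ) : ℚ) - 2) / 2 = ((m : ℚ) - 2) / 2 + 1 := by push_cast; ring
      rw [show e1 (m+2) = e1 m + 4 from rfl, hh]
      rw [show (((m : ℚ) - 2) / 2 + 1) = ((m : ℚ) - 2) / 2 + (1 : ℤ) from by norm_num,
        Int.ceil_add_intCast]
      push_cast
      omega

lemma floor_e2 : ∀ n : ℕ, 4 * ⌊(n : ℚ) / 2⌋ + 3 = (e2 n : ℤ) := by
  intro n
  induction n using Nat.strong_induction_on with
  | _ n ih =>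
    match n with
    | 0 =>
      show 4 * ⌊((0:ℕ) : ℚ) / 2⌋ + 3 = ((3:ℕ) : ℤ)
      norm_num
    | 1 =>
      show 4 * ⌊((1:ℕ) : ℚ) / 2⌋ + 3 = ((3:ℕ) : ℤ)
      rw [show ⌊((1:ℕ) : ℚ) / 2⌋ = 0 from by rw [Int.floor_eq_iff] <;> norm_num]
      norm_num
    | (m+2) =>
      have h := ih m (by omega)
      have hh : ((m+2 : ℕ) : ℚ) / 2 = (m : ℚ) / 2 + 1 := by push_cast; ring
      rw [show e2 (m+2) = e2 m + 4 from rfl, hh]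
      rw [show ((m : ℚ) / 2 + 1) = (m : ℚ) / 2 + (1 : ℤ) from by norm_num, Int.floor_add_intCast]
      push_cast
      omega

lemma tau_formula (p : ℝ) (hp0 : 0 ≤ p) : ∀ n : ℕ,
    tauR p n = p ^ (2 * n + 1) +
      p * (-p ^ (e1 n) + p ^ (e1 n + 1) - p ^ (e2 n) + p ^ 3 - p + 1) / (p^3 + p^2 + p + 1) := by
  have hden : p^3 + p^2 + p + 1 ≠ 0 := by
    nlinarith [pow_nonneg hp0 3, pow_nonneg hp0 2]
  intro n
  induction n using Nat.strong_induction_on with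
  | _ n ih =>
    match n with
    | 0 =>
      show p = _
      rw [show e1 0 = 0 from rfl, show e2 0 = 3 from rfl]
      field_simp
      ring
    | 1 =>
      show p * (1-p)^2 + p^3 = _
      rw [show e1 1 = 4 from rfl, show e2 1 = 3 from rfl]
      field_simp
      ring
    | (m+2) =>
      have h := ih m (by omega)
      show p * (1-p)^2 + p^4 * (1-p) + p^4 * tauR p m = _
      rw [h, show e1 (m+2) = e1 m + 4 from rfl, show e2 (m+2) = e2 m + 4 from rfl]
      field_simp
      ring

/-! ### Main theorem -/

/-- exact formula for `P_n(0)` for ECA rule 130 started from the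
Bernoulli measure `μ_p`, with integer ceiling/floor applied to `(n−2)/2` and `n/2`. -/
theorem rule130_prob_zero
    (p : ℝ) (hp0 : 0 ≤ p) (hp1 : p ≤ 1)
    (μ : Measure (ℤ → Bool)) (hprob : IsProbabilityMeasure μ) (hber : IsBernoulli p μ) :
    ∀ n : ℕ,
      (μ ((eca rule130)^[n] ⁻¹' cylinder [false])).toReal =
        1 - p ^ (2 * n + 1) -
          p * (-p ^ (4 * ⌈((n : ℚ) - 2) / 2⌉ + 4) + p ^ (4 * ⌈((n : ℚ) - 2) / 2⌉ + 5)
                - p ^ (4 * ⌊(n : ℚ) / 2⌋ + 3) + p ^ 3 - p + 1)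
            / (p ^ 3 + p ^ 2 + p + 1) := by
  intro n
  have hfix : ∀ y : ℤ → Bool, y ∈ cylinder [false] ↔ y 0 = false := by
    intro y
    constructor
    · intro h
      have := h ⟨0, by simp⟩
      simpa using this
    · intro h j
      have hj : (j : ℕ) = 0 := by
        have := j.isLt
        simp only [List.length_cons, List.length_nil] at this
        omega
      have hj' : j = ⟨0, by simp⟩ := by
        apply Fin.ext
        simpa using hj
      subst hj'
      simpa using h
  have hpre : (eca rule130)^[n] ⁻¹' cylinder [false] = {x : ℤ → Bool | T n n x = true}ᶜ := by
    ext x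
    simp only [Set.mem_preimage, Set.mem_compl_iff, Set.mem_setOf_eq]
    rw [hfix]
    have hT := FnT n 0 x
    rw [zero_add] at hT
    rw [hT]
    exact ⟨fun h => by simp [h], fun h => by simpa using h⟩
  have hS : μ {x : ℤ → Bool | T n n x = true} = ENNReal.ofReal (tauR p n) := by
    have h := master hp0 hp1 hber n n ∅ (fun _ => false) (by simp)
    simpa [cylE] using h
  rw [hpre, measure_compl (meas_S n n) (measure_ne_top μ _), measure_univ, hS]
  have hle : ENNReal.ofReal (tauR p n) ≤ 1 := by
    simpa using ENNReal.ofReal_le_one.mpr (tau_le_one hp0 hp1 n)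
  rw [ENNReal.toReal_sub_of_le hle ENNReal.one_ne_top, ENNReal.toReal_one,
    ENNReal.toReal_ofReal (tau_nonneg hp0 hp1 n)]
  have hz1 := ceil_e1 n
  have hz2 := floor_e2 n
  have hz1' : (4 * ⌈((n : ℚ) - 2) / 2⌉ + 5 : ℤ) = ((e1 n + 1 : ℕ) : ℤ) := by push_cast; omega
  rw [hz1, hz2, hz1', zpow_natCast, zpow_natCast, zpow_natCast]
  rw [tau_formula p hp0 n]
  ring
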